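/- In any execution of the consensus algorithm, there exists an iteration of the main loop whose candidate faulty set F contains all actually faulty nodes; hence, combining the agreement lemma (non-faulty nodes agree at the end of that iteration) with the validity lemma (states of non-faulty nodes are always some non-faulty node's earlier state), all non-faulty nodes output the same value and it is the input of some non-faulty node. -/
import Mathlib


/-- Byzantine consensus (Theorem 1, wrap-up): the loop enumerates all candidate sets
`F` with `|F| ≤ f`, so some iteration has `T ⊆ F`; combining the agreement lemma and
the validity lemma, at the end all non-faulty nodes hold the same value and this value
is the input of some non-faulty node. -/
theorem consensus_wrapup {V : Type*} [Fintype V] [DecidableEq V]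
    (f m : ℕ) (T : Finset V) (hT : T.card ≤ f)
    (iter : Fin m → Finset V)
    (hiter : ∀ F : Finset V, F.card ≤ f → ∃ i, iter i = F)
    (input : V → Bool)
    (state : Fin (m + 1) → V → Bool)
    (hinit : ∀ v : V, state 0 v = input v)
    (hvalidity : ∀ i : Fin m, ∀ v ∉ T, ∃ u ∉ T,
      state i.succ v = state i.castSucc u)
    (hagreement : ∀ i : Fin m, T ⊆ iter i → ∀ v ∉ T, ∀ w ∉ T,
      state i.succ v = state i.succ w) :
    (∀ v ∉ T, ∀ w ∉ T, state (Fin.last m) v = state (Fin.last m) w) ∧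
    (∀ v ∉ T, ∃ u ∉ T, state (Fin.last m) v = input u) := by
  -- validity at every step
  have valid : ∀ j : ℕ, ∀ hj : j ≤ m, ∀ v ∉ T,
      ∃ u ∉ T, state ⟨j, Nat.lt_succ_of_le hj⟩ v = input u := by
    intro j
    induction j with
    | zero =>
      intro hj v hv
      exact ⟨v, hv, hinit v⟩
    | succ j ih =>
      intro hj v hv
      obtain ⟨u, hu, hstep⟩ := hvalidity ⟨j, hj⟩ v hv
      obtain ⟨w, hw, hw'⟩ := ih (Nat.le_of_succ_le hj) u hu
      exact ⟨w, hw, by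
        have : state (Fin.succ ⟨j, hj⟩) v = state (Fin.castSucc ⟨j, hj⟩) u := hstep
        simpa [Fin.succ, Fin.castSucc, Fin.castAdd, Fin.castLE, hw'] using this⟩
  -- agreement: get iteration hitting T
  obtain ⟨i0, hi0⟩ := hiter T hT
  have agree : ∀ j : ℕ, ∀ hj : j ≤ m, i0.val + 1 ≤ j → ∀ v ∉ T, ∀ w ∉ T,
      state ⟨j, Nat.lt_succ_of_le hj⟩ v = state ⟨j, Nat.lt_succ_of_le hj⟩ w := by
    intro j
    induction j with
    | zero => intro _ h; omega
    | succ j ih =>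
      intro hj hle v hv w hw
      rcases Nat.lt_or_ge i0.val j with h | h
      · -- previous step already agrees
        obtain ⟨u, hu, hstep⟩ := hvalidity ⟨j, hj⟩ v hv
        obtain ⟨u', hu', hstep'⟩ := hvalidity ⟨j, hj⟩ w hw
        have hprev := ih (Nat.le_of_succ_le hj) h u hu u' hu'
        have e1 : state (Fin.succ ⟨j, hj⟩) v = state ⟨j, by omega⟩ u := by
          simpa [Fin.castSucc, Fin.castAdd, Fin.castLE] using hstep
        have e2 : state (Fin.succ ⟨j, hj⟩) w = state ⟨j, by omega⟩ u' := by
          simpa [Fin.castSucc, Fin.castAdd, Fin.castLE] using hstep'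
        have : state (Fin.succ ⟨j, hj⟩) v = state (Fin.succ ⟨j, hj⟩) w := by
          rw [e1, e2]; exact hprev
        simpa [Fin.succ] using this
      · -- j = i0.val : use the agreement lemma at iteration i0
        have hji : j = i0.val := by omega
        have := hagreement i0 (by rw [hi0]) v hv w hw
        have hival : (Fin.succ i0) = (⟨j + 1, Nat.lt_succ_of_le hj⟩ : Fin (m+1)) := by
          ext; simp [Fin.succ, hji]
        rw [hival] at this
        exact this
  refine ⟨?_, ?_⟩
  · intro v hv w hw
    have hm : i0.val + 1 ≤ m := i0.isLt
    have := agree m le_rfl hm v hv w hw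
    simpa [Fin.last] using this
  · intro v hv
    obtain ⟨u, hu, h⟩ := valid m le_rfl v hv
    exact ⟨u, hu, by simpa [Fin.last] using h⟩
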